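/- arXiv:1403.3838 — 3 statements merged into one kernel-verified Lean document; each statement's English description precedes it below -/
import Mathlib

section
/- Let n ≥ 1, m₀ ∈ ℕ, and R > 0, and let D ⊆ ℝ^n be the union of all closed dyadic cubes of side length 2^{-m₀} that are contained in the open ball B(0,R). Then for every x ∈ D and every t with 0 ≤ t < 1, the point tx lies in the interior of D. -/
open MeasureTheory Set Filter Metric Pointwise

noncomputable section

/-- The closed dyadic cube of side `2^{-m}` with lower corner `2^{-m} l`. -/
def dyadicCube (n m : ℕ) (l : Fin n → ℤ) : Set (EuclideanSpace ℝ (Fin n)) :=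
  {x | ∀ i, (2 : ℝ) ^ (-(m : ℤ)) * l i ≤ x i ∧ x i ≤ (2 : ℝ) ^ (-(m : ℤ)) * (l i + 1)}

/-- The union of all closed dyadic cubes of side `2^{-m}` contained in the open ball `B(0,R)`. -/
def dyadicRegion (n m : ℕ) (R : ℝ) : Set (EuclideanSpace ℝ (Fin n)) :=
  ⋃ l ∈ {l : Fin n → ℤ |
      dyadicCube n m l ⊆ Metric.ball (0 : EuclideanSpace ℝ (Fin n)) R},
    dyadicCube n m l

lemma coord_abs_le_norm {n : ℕ} (y : EuclideanSpace ℝ (Fin n)) (i : Fin n) :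
    |y i| ≤ ‖y‖ := by
  rw [EuclideanSpace.norm_eq]
  have h1 : |y i| ^ 2 ≤ ∑ j, ‖y j‖ ^ 2 := by
    have := Finset.single_le_sum (f := fun j => ‖y j‖ ^ 2)
      (fun j _ => by positivity) (Finset.mem_univ i)
    simpa [Real.norm_eq_abs] using this
  nlinarith [Real.sq_sqrt (show (0:ℝ) ≤ ∑ j, ‖y j‖ ^ 2 by positivity),
    Real.sqrt_nonneg (∑ j, ‖y j‖ ^ 2), abs_nonneg (y i)]

lemma euc_norm_le_of_abs_le {n : ℕ} (w c : EuclideanSpace ℝ (Fin n))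
    (hwc : ∀ i, |w i| ≤ |c i|) : ‖w‖ ≤ ‖c‖ := by
  rw [EuclideanSpace.norm_eq, EuclideanSpace.norm_eq]
  apply Real.sqrt_le_sqrt
  apply Finset.sum_le_sum
  intro i _
  simp only [Real.norm_eq_abs]
  exact pow_le_pow_left₀ (abs_nonneg _) (hwc i) 2

set_option maxHeartbeats 2000000 in
theorem stmt3 (n m₀ : ℕ) (hn : 1 ≤ n) (R : ℝ) (hR : 0 < R) :
    ∀ x ∈ dyadicRegion n m₀ R, ∀ t : ℝ, 0 ≤ t → t < 1 →
      t • x ∈ interior (dyadicRegion n m₀ R) := by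
  intro x hx t ht0 ht1
  set h : ℝ := (2:ℝ) ^ (-(m₀:ℤ)) with hh
  have hpos : 0 < h := by positivity
  obtain ⟨l, hl, hxl⟩ := mem_iUnion₂.mp hx
  have hlsub : dyadicCube n m₀ l ⊆ Metric.ball (0 : EuclideanSpace ℝ (Fin n)) R := hl
  have hδ : 0 < (1 - t) * h := mul_pos (by linarith) hpos
  have hsub : Metric.ball (t • x) ((1 - t) * h) ⊆ dyadicRegion n m₀ R := by
    intro z hz
    have hz' : ‖z - t • x‖ < (1 - t) * h := by
      rwa [mem_ball, dist_eq_norm] at hz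
    set l' : Fin n → ℤ := fun i => ⌊z i / h⌋ with hl'
    -- integer bound for each coordinate
    set kZ : Fin n → ℤ := fun i => if 0 ≤ l i then l i + 1 else -(l i) with hkZ
    have hk1 : ∀ i, (1:ℤ) ≤ kZ i := by
      intro i; simp only [hkZ]; split_ifs with hli <;> omega
    -- |x i| ≤ h * kZ i
    have hxk : ∀ i, |x i| ≤ h * (kZ i : ℝ) := by
      intro i
      obtain ⟨h1, h2⟩ := hxl i
      rw [abs_le]
      simp only [hkZ]
      split_ifs with hli
      · constructor
        · have : (0:ℝ) ≤ (l i : ℝ) := by exact_mod_cast hli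
          push_cast
          nlinarith
        · push_cast at h2 ⊢; linarith
      · push_cast at h1 h2 ⊢
        have : (l i : ℝ) + 1 ≤ 0 := by
          have : l i + 1 ≤ 0 := by omega
          exact_mod_cast this
        constructor
        · nlinarith
        · nlinarith
    -- |z i| < h * kZ i
    have hzk : ∀ i, |z i| < h * (kZ i : ℝ) := by
      intro i
      have h1 : |z i - t * x i| < (1 - t) * h := by
        have := coord_abs_le_norm (z - t • x) i
        have heq : (z - t • x) i = z i - t * x i := by
          simp [PiLp.sub_apply, PiLp.smul_apply, smul_eq_mul]
        rw [heq] at this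
        linarith
      have h2 := hxk i
      have h3 : (1:ℝ) ≤ (kZ i : ℝ) := by exact_mod_cast hk1 i
      calc |z i| ≤ |z i - t * x i| + t * |x i| := by
              have := abs_add_le (z i - t * x i) (t * x i)
              rw [abs_mul, abs_of_nonneg ht0] at this
              simpa using this
        _ < (1 - t) * h + t * (h * kZ i) := by nlinarith
        _ ≤ h * kZ i := by nlinarith
    -- z lies in the dyadic cube with corner l'
    have hzc : z ∈ dyadicCube n m₀ l' := by
      intro i
      constructor
      · have := Int.floor_le (z i / h)
        calc (2:ℝ) ^ (-(m₀:ℤ)) * (l' i) = h * (l' i) := rfl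
          _ ≤ h * (z i / h) := by
            apply mul_le_mul_of_nonneg_left _ hpos.le
            exact this
          _ = z i := by field_simp
      · have := (Int.lt_floor_add_one (z i / h)).le
        calc z i = h * (z i / h) := by field_simp
          _ ≤ h * (l' i + 1) := by
            apply mul_le_mul_of_nonneg_left _ hpos.le
            push_cast
            exact this
          _ = (2:ℝ) ^ (-(m₀:ℤ)) * (l' i + 1) := rfl
    -- the cube with corner l' is inside the ball
    have hcube : dyadicCube n m₀ l' ⊆ Metric.ball (0 : EuclideanSpace ℝ (Fin n)) R := by
      intro w hw
      -- the far corner of the original cube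
      set c : EuclideanSpace ℝ (Fin n) :=
        WithLp.toLp 2 (fun i => if 0 ≤ l i then h * ((l i : ℝ) + 1) else h * (l i : ℝ)) with hc
      have hcmem : c ∈ dyadicCube n m₀ l := by
        intro i
        show (2:ℝ) ^ (-(m₀:ℤ)) * (l i) ≤ c i ∧ c i ≤ (2:ℝ) ^ (-(m₀:ℤ)) * (l i + 1)
        have : c i = if 0 ≤ l i then h * ((l i : ℝ) + 1) else h * (l i : ℝ) := rfl
        rw [this]
        push_cast
        split_ifs with hli
        · constructor
          · nlinarith
          · linarith
        · constructor
          · linarith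
          · nlinarith
      have hcabs : ∀ i, |c i| = h * (kZ i : ℝ) := by
        intro i
        have : c i = if 0 ≤ l i then h * ((l i : ℝ) + 1) else h * (l i : ℝ) := rfl
        rw [this]
        simp only [hkZ]
        split_ifs with hli
        · rw [abs_of_nonneg]
          · push_cast; ring
          · have : (0:ℝ) ≤ (l i : ℝ) := by exact_mod_cast hli
            nlinarith
        · rw [abs_of_nonpos]
          · push_cast; ring
          · have : (l i : ℝ) ≤ 0 := by
              have : l i ≤ 0 := by omega
              exact_mod_cast this
            nlinarith
      have hwc : ∀ i, |w i| ≤ |c i| := by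
        intro i
        rw [hcabs i]
        obtain ⟨hw1, hw2⟩ := hw i
        have hw1 : h * (l' i : ℝ) ≤ w i := hw1
        have hw2 : w i ≤ h * ((l' i : ℝ) + 1) := by
          have := hw2; push_cast at this ⊢; linarith
        have hzi := hzk i
        rcases le_or_gt 0 (z i) with hzpos | hzneg
        · -- l' i ≥ 0 and l' i + 1 ≤ kZ i
          have hl0 : 0 ≤ l' i := by
            simp only [hl']
            exact Int.floor_nonneg.mpr (by positivity)
          have hlt : (l' i : ℝ) < (kZ i : ℝ) := by
            have h1 : (l' i : ℝ) ≤ z i / h := by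
              simp only [hl']; exact Int.floor_le _
            have h2 : z i / h < (kZ i : ℝ) := by
              rw [div_lt_iff₀ hpos]
              rw [abs_of_nonneg hzpos] at hzi
              linarith [hzi]
            linarith
          have hle : (l' i : ℤ) + 1 ≤ kZ i := by
            have : l' i < kZ i := by exact_mod_cast hlt
            omega
          rw [abs_le]
          constructor
          · have : (0:ℝ) ≤ h * (l' i : ℝ) := by
              have : (0:ℝ) ≤ (l' i : ℝ) := by exact_mod_cast hl0
              positivity
            have hknn : (0:ℝ) ≤ h * (kZ i : ℝ) := by
              have : (1:ℝ) ≤ (kZ i : ℝ) := by exact_mod_cast hk1 i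
              nlinarith
            linarith
          · have : ((l' i : ℝ) + 1) ≤ (kZ i : ℝ) := by exact_mod_cast hle
            nlinarith
        · -- z i < 0 : l' i ≤ -1 and -kZ i ≤ l' i
          have hdivneg : z i / h < 0 := div_neg_of_neg_of_pos hzneg hpos
          have hlneg : l' i < 0 := by
            simp only [hl']
            exact Int.floor_lt.mpr (by simpa using hdivneg)
          have hlow : -(kZ i) ≤ l' i := by
            simp only [hl']
            apply Int.le_floor.mpr
            rw [le_div_iff₀ hpos]
            rw [abs_of_neg hzneg] at hzi
            push_cast
            nlinarith
          have hup : w i ≤ 0 := by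
            have : (l' i : ℝ) + 1 ≤ 0 := by
              have : l' i + 1 ≤ 0 := by omega
              exact_mod_cast this
            nlinarith
          have hlow' : -(h * (kZ i : ℝ)) ≤ w i := by
            have : (-(kZ i) : ℝ) ≤ (l' i : ℝ) := by exact_mod_cast hlow
            nlinarith
          have hknn : (0:ℝ) ≤ h * (kZ i : ℝ) := by
            have : (1:ℝ) ≤ (kZ i : ℝ) := by exact_mod_cast hk1 i
            nlinarith
          rw [abs_le]
          exact ⟨hlow', by linarith⟩
      have hnorm : ‖w‖ ≤ ‖c‖ := euc_norm_le_of_abs_le w c hwc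
      have hcR : ‖c‖ < R := by
        have := hlsub hcmem
        rwa [mem_ball_zero_iff] at this
      rw [mem_ball_zero_iff]
      linarith
    exact mem_iUnion₂.mpr ⟨l', hcube, hzc⟩
  have hmem : t • x ∈ Metric.ball (t • x) ((1 - t) * h) := mem_ball_self hδ
  exact interior_maximal hsub isOpen_ball hmem
end
end

section
/- Let n ≥ 1, m₀ ∈ ℕ, and R > 0, and let D ⊆ ℝ^n be the union of all closed dyadic cubes of side length 2^{-m₀} that are contained in the open ball B(0,R); assume D is nonempty. Let ε₁ ∈ (0,1). Then for every x in (1+ε₁)D \ interior((1−ε₁)D), the set {r > 0 : x ∈ rD} is nonempty and its infimum f(x) lies in [1−ε₁, 1+ε₁]; moreover the function f : (1+ε₁)D \ interior((1−ε₁)D) → [1−ε₁, 1+ε₁], f(x) = inf{r > 0 : x ∈ rD}, is Lipschitz with Lipschitz constant 2^{m₀}. -/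
open MeasureTheory Set Filter Metric Pointwise

noncomputable section

variable {n m₀ : ℕ} {R : ℝ}

lemma hpos (m₀ : ℕ) : (0:ℝ) < (2:ℝ) ^ (-(m₀ : ℤ)) := zpow_pos (by norm_num) _

lemma abs_coord_le (z : EuclideanSpace ℝ (Fin n)) (i : Fin n) : |z i| ≤ ‖z‖ := by
  rw [EuclideanSpace.norm_eq]
  rw [show |z i| = Real.sqrt (‖z i‖ ^ 2) by
    rw [Real.norm_eq_abs, Real.sqrt_sq_eq_abs, abs_abs]]
  exact Real.sqrt_le_sqrt
    (Finset.single_le_sum (f := fun j => ‖z j‖ ^ 2) (fun j _ => sq_nonneg _)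
      (Finset.mem_univ i))

lemma norm_le_norm_of_abs_le {z w : EuclideanSpace ℝ (Fin n)}
    (hzw : ∀ i, |z i| ≤ |w i|) : ‖z‖ ≤ ‖w‖ := by
  rw [EuclideanSpace.norm_eq, EuclideanSpace.norm_eq]
  refine Real.sqrt_le_sqrt (Finset.sum_le_sum fun i _ => ?_)
  rw [Real.norm_eq_abs, Real.norm_eq_abs]
  exact pow_le_pow_left₀ (abs_nonneg _) (hzw i) 2

lemma mem_region_iff {y : EuclideanSpace ℝ (Fin n)} :
    y ∈ dyadicRegion n m₀ R ↔
      ∃ l, dyadicCube n m₀ l ⊆ Metric.ball (0 : EuclideanSpace ℝ (Fin n)) R ∧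
        y ∈ dyadicCube n m₀ l := by
  simp only [dyadicRegion, mem_iUnion, mem_setOf_eq, exists_prop]

/-- Core shrinking lemma: if `x ∈ D` and each coordinate of `y` is dominated by
`max |x i| 2^{-m₀}`, then `y ∈ D`. -/
lemma lemA {x : EuclideanSpace ℝ (Fin n)} (hx : x ∈ dyadicRegion n m₀ R)
    (y : EuclideanSpace ℝ (Fin n))
    (hy : ∀ i, |y i| ≤ max (|x i|) ((2:ℝ) ^ (-(m₀ : ℤ)))) :
    y ∈ dyadicRegion n m₀ R := by
  have hp : (0:ℝ) < (2:ℝ) ^ (-(m₀ : ℤ)) := hpos m₀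
  rw [mem_region_iff] at hx ⊢
  obtain ⟨l, hlb, hxl⟩ := hx
  set H : ℝ := (2:ℝ) ^ (-(m₀ : ℤ)) with hH
  set m : Fin n → ℤ := fun i => max (-(l i)) (l i + 1) with hm
  have hm1 : ∀ i, 1 ≤ m i := fun i => by simp only [hm]; omega
  -- the far corner of the original cube
  set c : EuclideanSpace ℝ (Fin n) :=
    (WithLp.equiv 2 _).symm
      (fun i => if l i + 1 ≤ -(l i) then H * l i else H * (l i + 1)) with hcdef
  have hci : ∀ i, c i = if l i + 1 ≤ -(l i) then H * (l i : ℝ) else H * ((l i : ℝ) + 1) := by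
    intro i
    by_cases hb : l i + 1 ≤ -(l i) <;> rfl
  have hcmem : c ∈ dyadicCube n m₀ l := by
    intro i
    rw [← hH, hci i]
    by_cases hb : l i + 1 ≤ -(l i)
    · rw [if_pos hb]
      refine ⟨le_refl _, ?_⟩
      have : (l i : ℝ) ≤ (l i : ℝ) + 1 := by linarith
      nlinarith
    · rw [if_neg hb]
      refine ⟨?_, le_refl _⟩
      have : (l i : ℝ) ≤ (l i : ℝ) + 1 := by linarith
      nlinarith
  have hcabs : ∀ i, |c i| = H * (m i : ℝ) := by
    intro i
    rw [hci i]
    by_cases hb : l i + 1 ≤ -(l i)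
    · rw [if_pos hb]
      have h1 : (l i : ℝ) ≤ 0 := by exact_mod_cast (by omega : l i ≤ 0)
      have h2 : (m i : ℝ) = -(l i : ℝ) := by
        have : m i = -(l i) := by simp only [hm]; omega
        rw [this]; push_cast; ring
      rw [abs_mul, abs_of_pos hp, abs_of_nonpos h1, h2]
    · rw [if_neg hb]
      have h1 : (0:ℝ) ≤ (l i : ℝ) + 1 := by exact_mod_cast (by omega : (0:ℤ) ≤ l i + 1)
      have h2 : (m i : ℝ) = (l i : ℝ) + 1 := by
        have : m i = l i + 1 := by simp only [hm]; omega
        rw [this]; push_cast; ring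
      rw [abs_mul, abs_of_pos hp, abs_of_nonneg h1, h2]
  have hcR : ‖c‖ < R := by
    have := hlb hcmem
    rwa [mem_ball, dist_zero_right] at this
  have hxM : ∀ i, |x i| ≤ H * (m i : ℝ) := by
    intro i
    have e1 : ((l i : ℝ) + 1) ≤ (m i : ℝ) := by
      exact_mod_cast (le_max_right (-(l i)) (l i + 1))
    have e2 : (-(m i : ℝ)) ≤ (l i : ℝ) := by
      have : -(l i) ≤ m i := le_max_left _ _
      have : (-(l i) : ℝ) ≤ (m i : ℝ) := by exact_mod_cast this
      linarith
    have h1 := (hxl i).1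
    have h2 := (hxl i).2
    rw [← hH] at h1 h2
    rw [abs_le]
    constructor <;> nlinarith
  have hyM : ∀ i, |y i| ≤ H * (m i : ℝ) := by
    intro i
    refine (hy i).trans (max_le (hxM i) ?_)
    have : (1:ℝ) ≤ (m i : ℝ) := by exact_mod_cast hm1 i
    nlinarith
  set l' : Fin n → ℤ := fun i => min ⌊y i / H⌋ (m i - 1) with hl'
  have hl'lb : ∀ i, -(m i) ≤ l' i := by
    intro i
    have hmy : (-(m i) : ℝ) ≤ y i / H := by
      rw [le_div_iff₀ hp]
      have := (abs_le.mp (hyM i)).1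
      nlinarith
    have h1 : -(m i) ≤ ⌊y i / H⌋ := Int.le_floor.mpr (by exact_mod_cast hmy)
    have h2 : -(m i) ≤ m i - 1 := by have := hm1 i; omega
    exact le_min h1 h2
  have hl'ub : ∀ i, l' i + 1 ≤ m i := by
    intro i
    have : l' i ≤ m i - 1 := min_le_right _ _
    omega
  have hymem : y ∈ dyadicCube n m₀ l' := by
    intro i
    rw [← hH]
    constructor
    · have h1 : (l' i : ℝ) ≤ y i / H := by
        refine le_trans ?_ (Int.floor_le _)
        exact_mod_cast min_le_left ⌊y i / H⌋ (m i - 1)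
      rw [le_div_iff₀ hp] at h1
      linarith [h1]
    · by_cases hc2 : ⌊y i / H⌋ ≤ m i - 1
      · have he : l' i = ⌊y i / H⌋ := min_eq_left hc2
        have h1 : y i / H < (⌊y i / H⌋ : ℝ) + 1 := Int.lt_floor_add_one _
        rw [div_lt_iff₀ hp] at h1
        rw [he]
        nlinarith
      · have he : l' i = m i - 1 := min_eq_right (by omega)
        have h1 := (abs_le.mp (hyM i)).2
        rw [he]
        push_cast
        nlinarith
  have hsub : dyadicCube n m₀ l' ⊆ Metric.ball (0 : EuclideanSpace ℝ (Fin n)) R := by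
    intro z hz
    rw [mem_ball, dist_zero_right]
    refine lt_of_le_of_lt (norm_le_norm_of_abs_le fun i => ?_) hcR
    rw [hcabs i]
    have h1 := (hz i).1
    have h2 := (hz i).2
    rw [← hH] at h1 h2
    have c1 : (-(m i) : ℝ) ≤ (l' i : ℝ) := by exact_mod_cast hl'lb i
    have c2 : (l' i : ℝ) + 1 ≤ (m i : ℝ) := by exact_mod_cast hl'ub i
    rw [abs_le]
    constructor <;> nlinarith
  exact ⟨l', hsub, hymem⟩

lemma mem_of_norm_le (hD : (dyadicRegion n m₀ R).Nonempty)
    {y : EuclideanSpace ℝ (Fin n)} (hy : ‖y‖ ≤ (2:ℝ) ^ (-(m₀ : ℤ))) :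
    y ∈ dyadicRegion n m₀ R := by
  obtain ⟨x, hx⟩ := hD
  exact lemA hx y fun i => le_max_of_le_right ((abs_coord_le y i).trans hy)

/-- Shifting lemma: translating a point of `r • D` by `v` lands in `s • D`
whenever `r + ‖v‖·2^{m₀} ≤ s`. -/
lemma shift {x v : EuclideanSpace ℝ (Fin n)} {r s : ℝ} (hr : 0 < r)
    (hx : x ∈ r • dyadicRegion n m₀ R)
    (hs : r + ‖v‖ * ((2:ℝ) ^ (-(m₀ : ℤ)))⁻¹ ≤ s) :
    x + v ∈ s • dyadicRegion n m₀ R := by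
  have hp : (0:ℝ) < (2:ℝ) ^ (-(m₀ : ℤ)) := hpos m₀
  have hs0 : 0 < s := lt_of_lt_of_le (by positivity) (le_trans (by nlinarith [norm_nonneg v, inv_pos.mpr hp]) hs)
  obtain ⟨u, hu, rfl⟩ := hx
  rw [Set.mem_smul_set_iff_inv_smul_mem₀ hs0.ne']
  refine lemA hu _ fun i => ?_
  set H : ℝ := (2:ℝ) ^ (-(m₀ : ℤ)) with hH
  set M : ℝ := max (|u i|) H with hM
  have hHM : H ≤ M := le_max_right _ _
  have huM : |u i| ≤ M := le_max_left _ _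
  have hM0 : 0 < M := lt_of_lt_of_le hp hHM
  have hvi : |v i| ≤ ‖v‖ := abs_coord_le v i
  have hcoord : (s⁻¹ • (r • u + v)) i = s⁻¹ * (r * u i + v i) := by
    simp [PiLp.smul_apply, PiLp.add_apply]; ring
  rw [hcoord]
  have key : r * |u i| + |v i| ≤ s * M := by
    have h1 : ‖v‖ ≤ ‖v‖ * H⁻¹ * M := by
      have e : ‖v‖ * H⁻¹ * H = ‖v‖ := by field_simp
      nlinarith [norm_nonneg v, inv_pos.mpr hp]
    nlinarith [norm_nonneg v, hr.le]
  calc |s⁻¹ * (r * u i + v i)| = s⁻¹ * |r * u i + v i| := by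
        rw [abs_mul, abs_of_pos (inv_pos.mpr hs0)]
    _ ≤ s⁻¹ * (s * M) := by
        refine mul_le_mul_of_nonneg_left ?_ (inv_pos.mpr hs0).le
        calc |r * u i + v i| ≤ |r * u i| + |v i| := abs_add_le _ _
          _ = r * |u i| + |v i| := by rw [abs_mul, abs_of_pos hr]
          _ ≤ s * M := key
    _ = M := by field_simp

lemma S_nonempty (hD : (dyadicRegion n m₀ R).Nonempty)
    (x : EuclideanSpace ℝ (Fin n)) :
    {r : ℝ | 0 < r ∧ x ∈ r • dyadicRegion n m₀ R}.Nonempty := by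
  have hp : (0:ℝ) < (2:ℝ) ^ (-(m₀ : ℤ)) := hpos m₀
  set H : ℝ := (2:ℝ) ^ (-(m₀ : ℤ)) with hH
  refine ⟨‖x‖ * H⁻¹ + 1, by positivity, ?_⟩
  have hr0 : (0:ℝ) < ‖x‖ * H⁻¹ + 1 := by positivity
  rw [Set.mem_smul_set_iff_inv_smul_mem₀ hr0.ne']
  refine mem_of_norm_le hD ?_
  rw [norm_smul, norm_inv, Real.norm_eq_abs, abs_of_pos hr0]
  rw [inv_mul_le_iff₀ hr0, ← hH]
  have : (‖x‖ * H⁻¹ + 1) * H = ‖x‖ + H := by field_simp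
  nlinarith [norm_nonneg x]

theorem stmt4 (n m₀ : ℕ) (hn : 1 ≤ n) (R : ℝ) (hR : 0 < R)
    (hD : (dyadicRegion n m₀ R).Nonempty) (ε₁ : ℝ) (hε : ε₁ ∈ Ioo (0 : ℝ) 1) :
    (∀ x ∈ ((1 + ε₁) • dyadicRegion n m₀ R) \
        interior ((1 - ε₁) • dyadicRegion n m₀ R),
      {r : ℝ | 0 < r ∧ x ∈ r • dyadicRegion n m₀ R}.Nonempty ∧
      sInf {r : ℝ | 0 < r ∧ x ∈ r • dyadicRegion n m₀ R} ∈ Icc (1 - ε₁) (1 + ε₁)) ∧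
    LipschitzOnWith ((2 : NNReal) ^ m₀)
      (fun x => sInf {r : ℝ | 0 < r ∧ x ∈ r • dyadicRegion n m₀ R})
      (((1 + ε₁) • dyadicRegion n m₀ R) \
        interior ((1 - ε₁) • dyadicRegion n m₀ R)) := by
  obtain ⟨hε0, hε1⟩ := hε
  have hp : (0:ℝ) < (2:ℝ) ^ (-(m₀ : ℤ)) := hpos m₀
  set H : ℝ := (2:ℝ) ^ (-(m₀ : ℤ)) with hH
  have hk : H⁻¹ = (2:ℝ) ^ m₀ := by
    rw [hH, ← zpow_natCast (2:ℝ) m₀, ← zpow_neg, neg_neg]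
  set D := dyadicRegion n m₀ R with hDdef
  set S : EuclideanSpace ℝ (Fin n) → Set ℝ :=
    fun x => {r : ℝ | 0 < r ∧ x ∈ r • D} with hSdef
  have hne : ∀ x, (S x).Nonempty := fun x => S_nonempty hD x
  have hbdd : ∀ x, BddBelow (S x) := fun x => ⟨0, fun r hr => hr.1.le⟩
  set A := ((1 + ε₁) • D) \ interior ((1 - ε₁) • D) with hA
  have hub : ∀ x ∈ A, sInf (S x) ≤ 1 + ε₁ := by
    intro x hx
    exact csInf_le (hbdd x) ⟨by linarith, hx.1⟩
  have hlb' : ∀ x ∈ A, ∀ r ∈ S x, 1 - ε₁ ≤ r := by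
    intro x hx r hr
    by_contra hcon
    push_neg at hcon
    apply hx.2
    rw [mem_interior_iff_mem_nhds, Metric.mem_nhds_iff]
    refine ⟨(1 - ε₁ - r) * H, by nlinarith [hr.1], ?_⟩
    intro z hz
    have hzx : ‖z - x‖ < (1 - ε₁ - r) * H := by
      rwa [mem_ball, dist_eq_norm] at hz
    have hzz : z = x + (z - x) := by rw [add_sub_cancel]
    rw [hzz]
    refine shift hr.1 hr.2 ?_
    rw [← hH]
    have : ‖z - x‖ * H⁻¹ < (1 - ε₁ - r) * H * H⁻¹ :=
      mul_lt_mul_of_pos_right hzx (inv_pos.mpr hp)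
    rw [mul_assoc, mul_inv_cancel₀ hp.ne', mul_one] at this
    linarith
  have hlow : ∀ x ∈ A, 1 - ε₁ ≤ sInf (S x) := fun x hx =>
    le_csInf (hne x) (hlb' x hx)
  have key : ∀ a b : EuclideanSpace ℝ (Fin n),
      sInf (S a) ≤ sInf (S b) + (2:ℝ) ^ m₀ * dist a b := by
    intro a b
    have step : ∀ r ∈ S b, sInf (S a) ≤ r + (2:ℝ) ^ m₀ * dist a b := by
      intro r hr
      refine csInf_le (hbdd a) ⟨?_, ?_⟩
      · have : (0:ℝ) ≤ (2:ℝ) ^ m₀ * dist a b := by positivity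
        linarith [hr.1]
      · have hside : r + ‖a - b‖ * H⁻¹ ≤ r + (2:ℝ) ^ m₀ * dist a b := by
          rw [hk, dist_eq_norm]
          linarith [mul_comm ‖a - b‖ ((2:ℝ) ^ m₀)]
        have hmem := shift hr.1 hr.2 hside
        rwa [add_sub_cancel] at hmem
    have := le_csInf (hne b) (fun r hr => by linarith [step r hr] :
      ∀ r ∈ S b, sInf (S a) - (2:ℝ) ^ m₀ * dist a b ≤ r)
    linarith
  constructor
  · intro x hx
    exact ⟨hne x, hlow x hx, hub x hx⟩
  · refine LipschitzOnWith.of_dist_le_mul fun x hx y hy => ?_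
    have hcoe : (((2 : NNReal) ^ m₀ : NNReal) : ℝ) = (2:ℝ) ^ m₀ := by
      push_cast
      ring
    rw [Real.dist_eq, hcoe]
    rw [abs_sub_le_iff]
    constructor
    · have := key x y
      linarith
    · have := key y x
      rw [dist_comm y x] at this
      linarith
end
end

section
/- Let 1 ≤ d < k ≤ n be integers. There exists a constant K = K(d,k) > 0, depending only on d and k, such that for every k-dimensional cube σ in ℝ^n and every set E ⊆ σ with H^d(E) < ∞, there is a subset X of (relative interior of σ) \ E with H^k(X) > 0 such that for every x ∈ X, H^d(Π_{σ,x}(E)) ≤ K·H^d(E). -/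
open MeasureTheory Set Filter Metric Pointwise

noncomputable section

/-- The cube `[0,a]^k` in `ℝ^k`. -/
def modelCube (k : ℕ) (a : ℝ) : Set (EuclideanSpace ℝ (Fin k)) :=
  {y | ∀ i, y i ∈ Icc 0 a}

/-- The interior `(0,a)^k` of the cube `[0,a]^k` in `ℝ^k`. -/
def modelCubeInt (k : ℕ) (a : ℝ) : Set (EuclideanSpace ℝ (Fin k)) :=
  {y | ∀ i, y i ∈ Ioo 0 a}

/-- The image of `E` under the radial projection centered at `x` onto the set `B`
(taken to be the relative boundary of a cube): the points of `B` lying on a half-line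
issued from `x` and passing through a point of `E`. -/
def radialProjImage {V : Type*} [AddCommGroup V] [Module ℝ V]
    (B : Set V) (x : V) (E : Set V) : Set V :=
  {z | z ∈ B ∧ ∃ y ∈ E, ∃ s : ℝ, 1 ≤ s ∧ z = x + s • (y - x)}

open Topology
open scoped ENNReal

set_option linter.unusedSectionVars false
set_option linter.unusedVariables false

namespace Stmt11Aux


variable {k : ℕ}

lemma abs_coord_le_norm (v : EuclideanSpace ℝ (Fin k)) (i : Fin k) : |v i| ≤ ‖v‖ := by
  rw [EuclideanSpace.norm_eq]
  rw [← Real.sqrt_sq_eq_abs]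
  apply Real.sqrt_le_sqrt
  have : v i ^ 2 = ‖v i‖ ^ 2 := by rw [Real.norm_eq_abs, sq_abs]
  rw [this]
  exact Finset.single_le_sum (f := fun j => ‖v j‖ ^ 2) (fun j _ => sq_nonneg _) (Finset.mem_univ i)

lemma norm_le_sqrt_mul (v : EuclideanSpace ℝ (Fin k)) {c : ℝ} (hc : 0 ≤ c)
    (h : ∀ i, |v i| ≤ c) : ‖v‖ ≤ Real.sqrt k * c := by
  rw [EuclideanSpace.norm_eq]
  have h1 : ∑ i, ‖v i‖ ^ 2 ≤ (k : ℝ) * c ^ 2 := by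
    calc ∑ i, ‖v i‖ ^ 2 ≤ ∑ _i : Fin k, c ^ 2 := by
          apply Finset.sum_le_sum
          intro i _
          have := h i
          rw [Real.norm_eq_abs]
          nlinarith [abs_nonneg (v i)]
      _ = (k : ℝ) * c ^ 2 := by simp [Finset.sum_const, mul_comm]
  calc Real.sqrt (∑ i, ‖v i‖ ^ 2) ≤ Real.sqrt ((k : ℝ) * c ^ 2) := Real.sqrt_le_sqrt h1
    _ = Real.sqrt k * c := by
        rw [Real.sqrt_mul (Nat.cast_nonneg k), Real.sqrt_sq hc]

lemma sub_apply (v w : EuclideanSpace ℝ (Fin k)) (i : Fin k) : (v - w) i = v i - w i := rfl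
lemma add_apply (v w : EuclideanSpace ℝ (Fin k)) (i : Fin k) : (v + w) i = v i + w i := rfl
lemma smul_apply (c : ℝ) (v : EuclideanSpace ℝ (Fin k)) (i : Fin k) : (c • v) i = c * v i := rfl

lemma measurable_coord (i : Fin k) : Measurable fun v : EuclideanSpace ℝ (Fin k) => v i := by
  have : Continuous fun v : EuclideanSpace ℝ (Fin k) => v i := by
    apply (continuous_apply i).comp
    exact (PiLp.continuous_ofLp 2 fun _ : Fin k => ℝ)
  exact this.measurable

lemma measurableSet_modelCube (a : ℝ) : MeasurableSet (modelCube k a) := by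
  have : modelCube k a = ⋂ i, (fun v : EuclideanSpace ℝ (Fin k) => v i) ⁻¹' Icc 0 a := by
    ext v; simp [modelCube]
  rw [this]
  exact MeasurableSet.iInter fun i => (measurable_coord i) measurableSet_Icc

lemma convex_modelCube (a : ℝ) : Convex ℝ (modelCube k a) := by
  intro y hy z hz s t hs ht hst
  intro i
  have := (convex_Icc (0:ℝ) a) (hy i) (hz i) hs ht hst
  simpa [add_apply, smul_apply] using this


section Gauge
variable (hk : 0 < k) {a : ℝ} (ha : 0 < a) {x : EuclideanSpace ℝ (Fin k)}
  (hx : ∀ i, x i ∈ Icc (a/4) (3*a/4))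

/-- translated cube -/
def Dset (x : EuclideanSpace ℝ (Fin k)) (a : ℝ) : Set (EuclideanSpace ℝ (Fin k)) :=
  {v | x + v ∈ modelCube k a}

include ha hx in
lemma ball_subset_Dset : ball (0 : EuclideanSpace ℝ (Fin k)) (a/4) ⊆ Dset x a := by
  intro v hv
  rw [mem_ball_zero_iff] at hv
  intro i
  have h1 : |v i| < a/4 := lt_of_le_of_lt (abs_coord_le_norm v i) hv
  have h2 := hx i
  rw [abs_lt] at h1
  constructor
  · have : (x + v) i = x i + v i := rfl
    rw [this]; linarith [h2.1]
  · have : (x + v) i = x i + v i := rfl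
    rw [this]; linarith [h2.2]

include hk ha hx in
lemma Dset_subset_ball : Dset x a ⊆ ball (0 : EuclideanSpace ℝ (Fin k)) (2 * (Real.sqrt k * a)) := by
  intro v hv
  rw [mem_ball_zero_iff]
  have h1 : ‖v‖ ≤ Real.sqrt k * a := by
    apply norm_le_sqrt_mul v ha.le
    intro i
    have h2 := hv i
    have h3 := hx i
    have : (x + v) i = x i + v i := rfl
    rw [this] at h2
    rw [abs_le]
    constructor <;> [linarith [h2.1, h3.2]; linarith [h2.2, h3.1]]
  have hR : 0 < Real.sqrt k * a := by
    apply mul_pos _ ha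
    exact Real.sqrt_pos.2 (by exact_mod_cast hk)
  linarith

include ha hx in
lemma absorbent_Dset : Absorbent ℝ (Dset x a) :=
  (absorbent_ball_zero (by linarith : (0:ℝ) < a/4)).mono (ball_subset_Dset ha hx)

lemma convex_Dset : Convex ℝ (Dset x a) := by
  intro u hu v hv s t hs ht hst
  have hxx : s • (x + u) + t • (x + v) = (s + t) • x + (s • u + t • v) := by
    rw [smul_add, smul_add, add_smul]; abel
  rw [hst, one_smul] at hxx
  show x + _ ∈ modelCube k a
  rw [← hxx]
  exact convex_modelCube a hu hv hs ht hst

include hk ha hx in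
lemma gauge_lower (v : EuclideanSpace ℝ (Fin k)) :
    ‖v‖ / (2 * (Real.sqrt k * a)) ≤ gauge (Dset x a) v := by
  have := gauge_mono (absorbent_Dset ha hx) (Dset_subset_ball hk ha hx) v
  rwa [gauge_ball (by positivity)] at this

include ha hx in
lemma gauge_upper (v : EuclideanSpace ℝ (Fin k)) : gauge (Dset x a) v ≤ 4 / a * ‖v‖ := by
  have := mul_gauge_le_norm (ball_subset_Dset ha hx) (x := v)
  rw [div_mul_eq_mul_div, le_div_iff₀ ha, mul_comm]
  linarith

include ha hx in
lemma gauge_sub_le (u v : EuclideanSpace ℝ (Fin k)) :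
    |gauge (Dset x a) u - gauge (Dset x a) v| ≤ 4 / a * ‖u - v‖ := by
  have h1 := gauge_add_le (convex_Dset (x := x) (a := a)) (absorbent_Dset ha hx) v (u - v)
  have h2 := gauge_add_le (convex_Dset (x := x) (a := a)) (absorbent_Dset ha hx) u (v - u)
  rw [add_sub_cancel] at h1
  rw [add_sub_cancel] at h2
  have h3 := gauge_upper ha hx (u - v)
  have h4 := gauge_upper ha hx (v - u)
  rw [norm_sub_rev v u] at h4
  rw [abs_le]
  constructor <;> linarith

include ha hx in
lemma gauge_le_one_of_memC {z : EuclideanSpace ℝ (Fin k)} (hz : z ∈ modelCube k a) :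
    gauge (Dset x a) (z - x) ≤ 1 := by
  apply gauge_le_one_of_mem
  show x + (z - x) ∈ modelCube k a
  rwa [add_sub_cancel]

include ha hx in
lemma one_le_gauge_of_not_int {z : EuclideanSpace ℝ (Fin k)}
    (hz : z ∈ modelCube k a) (hz' : z ∉ modelCubeInt k a) :
    1 ≤ gauge (Dset x a) (z - x) := by
  by_contra h
  push_neg at h
  have hmem : Dset x a ∈ 𝓝 (0 : EuclideanSpace ℝ (Fin k)) :=
    Filter.mem_of_superset (ball_mem_nhds _ (show (0:ℝ) < a/4 by linarith)) (ball_subset_Dset ha hx)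
  have hint : z - x ∈ interior (Dset x a) :=
    (gauge_lt_one_iff_mem_interior (convex_Dset) hmem).1 h
  -- derive z ∈ modelCubeInt
  apply hz'
  rw [mem_interior_iff_mem_nhds, Metric.mem_nhds_iff] at hint
  obtain ⟨ε, hε, hball⟩ := hint
  intro i
  have key : ∀ w : EuclideanSpace ℝ (Fin k), ‖w‖ < ε → 0 ≤ z i + w i ∧ z i + w i ≤ a := by
    intro w hw
    have : (z - x) + w ∈ Dset x a := hball (by rwa [mem_ball_iff_norm, add_sub_cancel_left])
    have h2 := this i
    have hco : (x + ((z - x) + w)) i = z i + w i := by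
      have : x + ((z - x) + w) = z + w := by abel
      rw [this]; rfl
    rw [hco] at h2
    exact ⟨h2.1, h2.2⟩
  have hs : ‖(ε/2) • EuclideanSpace.single i (1:ℝ)‖ < ε := by
    rw [norm_smul, EuclideanSpace.norm_single]
    simp [abs_of_pos hε]
    linarith
  have hsn : ‖(-(ε/2)) • EuclideanSpace.single i (1:ℝ)‖ < ε := by
    rw [norm_smul]
    rw [EuclideanSpace.norm_single]
    simp [abs_of_pos hε]
    linarith
  have k1 := key _ hs
  have k2 := key _ hsn
  have hc1 : ((ε/2) • EuclideanSpace.single i (1:ℝ)) i = ε/2 := by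
    rw [smul_apply, EuclideanSpace.single_apply]
    simp
  have hc2 : ((-(ε/2)) • EuclideanSpace.single i (1:ℝ)) i = -(ε/2) := by
    rw [smul_apply, EuclideanSpace.single_apply]
    simp
  rw [hc1] at k1
  rw [hc2] at k2
  constructor
  · linarith [k2.1]
  · linarith [k1.2]

end Gauge

lemma decomp_aux {V : Type*} [AddCommGroup V] [Module ℝ V] (x v w : V) (p q : ℝ) :
    (x + p • v) - (x + q • w) = p • (v - w) + (p - q) • w := by
  rw [sub_smul, smul_sub]; abel

/-- the radial projection onto the boundary of the cube, from center `x`. -/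
def projMap (x : EuclideanSpace ℝ (Fin k)) (a : ℝ) (y : EuclideanSpace ℝ (Fin k)) :
    EuclideanSpace ℝ (Fin k) :=
  x + (gauge (Dset x a) (y - x))⁻¹ • (y - x)

section P
variable (hk : 0 < k) {a : ℝ} (ha : 0 < a) {x : EuclideanSpace ℝ (Fin k)}
  (hx : ∀ i, x i ∈ Icc (a/4) (3*a/4))

include ha hx in
lemma projMap_eq {y z : EuclideanSpace ℝ (Fin k)} {s : ℝ} (hs : 1 ≤ s)
    (hzC : z ∈ modelCube k a) (hzI : z ∉ modelCubeInt k a)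
    (hzE : z = x + s • (y - x)) : projMap x a y = z := by
  set g := gauge (Dset x a) with hg
  have h1 : g (z - x) = 1 :=
    le_antisymm (gauge_le_one_of_memC ha hx hzC) (one_le_gauge_of_not_int ha hx hzC hzI)
  have h2 : z - x = s • (y - x) := by rw [hzE]; abel
  have h3 : g (s • (y - x)) = s * g (y - x) := by
    rw [hg]
    exact gauge_smul_of_nonneg (by linarith) _
  have h4 : s * g (y - x) = 1 := by rw [← h3, ← h2, h1]
  have hs0 : s ≠ 0 := by intro h; rw [h] at h4; simp at h4
  have h5 : g (y - x) = s⁻¹ := by field_simp at h4 ⊢; linarith [h4]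
  rw [projMap, ← hg, h5, inv_inv, ← h2]
  abel

include hk ha hx in
lemma projMap_lip {r : ℝ} (hr : 0 < r) (y z : EuclideanSpace ℝ (Fin k))
    (hy : r ≤ ‖y - x‖) (hz : r ≤ ‖z - x‖) :
    ‖projMap x a y - projMap x a z‖ ≤
      2 * (Real.sqrt k * a) / r * (1 + 8 * Real.sqrt k) * ‖y - z‖ := by
  set R := Real.sqrt k * a with hR
  have hkR : 0 < Real.sqrt k := Real.sqrt_pos.2 (by exact_mod_cast hk)
  have hRpos : 0 < R := mul_pos hkR ha
  set g := gauge (Dset x a) with hg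
  set v := y - x with hv
  set w := z - x with hw
  have hgv1 : ‖v‖ / (2*R) ≤ g v := gauge_lower hk ha hx v
  have hgw1 : ‖w‖ / (2*R) ≤ g w := gauge_lower hk ha hx w
  have hrv : r / (2*R) ≤ ‖v‖ / (2*R) := by gcongr
  have hrw : r / (2*R) ≤ ‖w‖ / (2*R) := by gcongr
  have hgv0 : 0 < g v := lt_of_lt_of_le (by positivity) (le_trans hrv hgv1)
  have hgw0 : 0 < g w := lt_of_lt_of_le (by positivity) (le_trans hrw hgw1)
  have hgvinv : (g v)⁻¹ ≤ 2*R/r := by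
    rw [← inv_div r (2*R)]
    exact inv_anti₀ (by positivity) (le_trans hrv hgv1)
  have hwle : (g w)⁻¹ * ‖w‖ ≤ 2*R := by
    rw [inv_mul_le_iff₀ hgw0]
    rw [div_le_iff₀ (by positivity)] at hgw1
    linarith [hgw1]
  have hdecomp : projMap x a y - projMap x a z = (g v)⁻¹ • (v - w) + ((g v)⁻¹ - (g w)⁻¹) • w := by
    rw [projMap, projMap, ← hg, ← hv, ← hw]
    exact decomp_aux x v w _ _
  have hvw : v - w = y - z := by rw [hv, hw]; abel
  have habs : |(g v)⁻¹ - (g w)⁻¹| = |g w - g v| * (g v)⁻¹ * (g w)⁻¹ := by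
    rw [inv_sub_inv hgv0.ne' hgw0.ne', abs_div, abs_of_pos (mul_pos hgv0 hgw0)]
    field_simp
  have hsub : |g w - g v| ≤ 4 / a * ‖y - z‖ := by
    have := gauge_sub_le ha hx w v
    rw [← hg] at this
    have hwv : w - v = -(y - z) := by rw [hv, hw]; abel
    rwa [hwv, norm_neg] at this
  calc ‖projMap x a y - projMap x a z‖
      = ‖(g v)⁻¹ • (v - w) + ((g v)⁻¹ - (g w)⁻¹) • w‖ := by rw [hdecomp]
    _ ≤ ‖(g v)⁻¹ • (v - w)‖ + ‖((g v)⁻¹ - (g w)⁻¹) • w‖ := norm_add_le _ _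
    _ = (g v)⁻¹ * ‖y - z‖ + |(g v)⁻¹ - (g w)⁻¹| * ‖w‖ := by
        rw [hvw, norm_smul, norm_smul, Real.norm_eq_abs, Real.norm_eq_abs,
          abs_of_pos (inv_pos.2 hgv0)]
    _ = (g v)⁻¹ * ‖y - z‖ + (|g w - g v| * (g v)⁻¹) * ((g w)⁻¹ * ‖w‖) := by
        rw [habs]; ring
    _ ≤ (2*R/r) * ‖y - z‖ + ((4 / a * ‖y - z‖) * (2*R/r)) * (2*R) := by
        gcongr <;> first | positivity | exact abs_nonneg _
    _ = 2 * R / r * (1 + 8 * Real.sqrt k) * ‖y - z‖ := by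
        rw [hR]; field_simp; ring

end P

section A
variable (hk : 0 < k) {a : ℝ} (ha : 0 < a) {x : EuclideanSpace ℝ (Fin k)}
  (hx : ∀ i, x i ∈ Icc (a/4) (3*a/4))

/-- dyadic annuli around x -/
def annulus (x : EuclideanSpace ℝ (Fin k)) (a : ℝ) (j : ℕ) : Set (EuclideanSpace ℝ (Fin k)) :=
  {y | ‖y - x‖ ∈ Ioc (Real.sqrt k * a / 2^(j+1)) (Real.sqrt k * a / 2^j)}

lemma measurableSet_annulus (j : ℕ) : MeasurableSet (annulus x a j) := by
  have hc : Continuous fun y : EuclideanSpace ℝ (Fin k) => ‖y - x‖ :=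
    (continuous_id.sub continuous_const).norm
  exact hc.measurable measurableSet_Ioc

include ha in
lemma disjoint_annulus : Pairwise (Function.onFun Disjoint (annulus x a)) := by
  have key : ∀ i j : ℕ, i < j → Disjoint (annulus x a i) (annulus x a j) := by
    intro i j hij
    rw [Set.disjoint_left]
    intro y hyi hyj
    have h1 : Real.sqrt k * a / 2^(i+1) < ‖y - x‖ := hyi.1
    have h2 : ‖y - x‖ ≤ Real.sqrt k * a / 2^j := hyj.2
    have h3 : (Real.sqrt k * a) / 2^j ≤ Real.sqrt k * a / 2^(i+1) := by
      gcongr <;> first | positivity | omega | norm_num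
    linarith
  intro i j hij
  rcases lt_or_gt_of_ne hij with h | h
  · exact key i j h
  · exact (key j i h).symm

include ha hx in
lemma norm_sub_le_R {y : EuclideanSpace ℝ (Fin k)} (hy : y ∈ modelCube k a) :
    ‖y - x‖ ≤ Real.sqrt k * a := by
  apply norm_le_sqrt_mul _ ha.le
  intro i
  have h1 := hy i
  have h2 := hx i
  have : (y - x) i = y i - x i := rfl
  rw [this, abs_le]
  constructor <;> [linarith [h1.1, h2.2]; linarith [h1.2, h2.1]]

omit hx in
include hk ha in
lemma annulus_cover' {y : EuclideanSpace ℝ (Fin k)} (hy : ‖y - x‖ ≤ Real.sqrt k * a)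
    (hyx : y ≠ x) : ∃ j, y ∈ annulus x a j := by
  set R := Real.sqrt k * a with hR
  have hRpos : 0 < R := by
    rw [hR]; exact mul_pos (Real.sqrt_pos.2 (by exact_mod_cast hk)) ha
  set t := ‖y - x‖ with ht
  have ht0 : 0 < t := by
    rw [ht, norm_pos_iff, sub_ne_zero]; exact hyx
  have htR : t ≤ R := hy
  have hex : ∃ j : ℕ, R / 2^(j+1) < t := by
    obtain ⟨n, hn⟩ := exists_pow_lt_of_lt_one (div_pos ht0 hRpos) (show (1:ℝ)/2 < 1 by norm_num)
    refine ⟨n, ?_⟩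
    have hh : ((1:ℝ)/2)^n = 1/2^n := by rw [div_pow, one_pow]
    rw [hh, lt_div_iff₀ (by positivity)] at hn
    rw [div_lt_iff₀ (by positivity)]
    have h2 : (2:ℝ)^n ≤ 2^(n+1) := by
      apply pow_le_pow_right₀ one_le_two (Nat.le_succ n)
    calc R = (1/2^n * R) * 2^n := by field_simp
      _ < t * 2^n := by
          apply mul_lt_mul_of_pos_right _ (by positivity)
          rw [div_mul_eq_mul_div, one_mul, div_lt_iff₀ (by positivity)]
          rw [div_mul_eq_mul_div, div_lt_iff₀ (by positivity)] at hn
          linarith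
      _ ≤ t * 2^(n+1) := by
          apply mul_le_mul_of_nonneg_left h2 ht0.le
  classical
  set j := Nat.find hex with hj
  refine ⟨j, Nat.find_spec hex, ?_⟩
  rcases Nat.eq_zero_or_pos j with h0 | hpos
  · rw [h0]; simpa using htR
  · obtain ⟨m, hm⟩ := Nat.exists_eq_add_of_lt hpos
    have hmj : m + 1 = j := by omega
    have := Nat.find_min hex (m := m) (by omega)
    push_neg at this
    rw [hmj] at this
    exact this

include hk ha hx in
lemma lipschitzOnWith_annulus (j : ℕ) :
    LipschitzOnWith (4 * (1 + 8 * Real.sqrt k) * 2^j : ℝ).toNNReal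
      (projMap x a) (annulus x a j) := by
  have hkR : 0 < Real.sqrt k := Real.sqrt_pos.2 (by exact_mod_cast hk)
  apply LipschitzOnWith.of_dist_le_mul
  intro y hy z hz
  have hr : (0:ℝ) < Real.sqrt k * a / 2^(j+1) := by positivity
  have key := projMap_lip hk ha hx hr y z (le_of_lt hy.1) (le_of_lt hz.1)
  rw [dist_eq_norm, dist_eq_norm]
  calc ‖projMap x a y - projMap x a z‖
      ≤ 2 * (Real.sqrt k * a) / (Real.sqrt k * a / 2^(j+1)) * (1 + 8 * Real.sqrt k) * ‖y - z‖ :=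
        key
    _ = (4 * (1 + 8 * Real.sqrt k) * 2^j) * ‖y - z‖ := by
        have hRa : Real.sqrt k * a ≠ 0 := by positivity
        field_simp
        ring
    _ = (((4 * (1 + 8 * Real.sqrt k) * 2^j : ℝ)).toNNReal : ℝ) * ‖y - z‖ := by
        rw [Real.coe_toNNReal _ (by positivity)]

end A

section PB
variable (hk : 0 < k) {a : ℝ} (ha : 0 < a) {x : EuclideanSpace ℝ (Fin k)}
  (hx : ∀ i, x i ∈ Icc (a/4) (3*a/4))

include hk ha hx in
lemma pointwise_bound (d : ℕ) {F E₀ : Set (EuclideanSpace ℝ (Fin k))}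
    (hF : MeasurableSet F) (hFC : F ⊆ modelCube k a) (hEF : E₀ ⊆ F) (hxE : x ∉ E₀) :
    μH[d] (radialProjImage (modelCube k a \ modelCubeInt k a) x E₀) ≤
      (ENNReal.ofReal (4 * (1 + 8 * Real.sqrt k) * (Real.sqrt k * a)))^d *
        ∫⁻ y, ((edist x y)⁻¹)^d ∂((μH[d] : Measure (EuclideanSpace ℝ (Fin k))).restrict F) := by
  set μ := (μH[d] : Measure (EuclideanSpace ℝ (Fin k))).restrict F with hμ
  set f : EuclideanSpace ℝ (Fin k) → ℝ≥0∞ := fun y => ((edist x y)⁻¹)^d with hf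
  have hfmeas : Measurable f := by
    have hce : Continuous fun y : EuclideanSpace ℝ (Fin k) => edist x y :=
      continuous_const.edist continuous_id
    exact (hce.measurable.inv).pow_const d
  have hsub : radialProjImage (modelCube k a \ modelCubeInt k a) x E₀ ⊆ projMap x a '' E₀ := by
    rintro z ⟨hzB, y, hyE, s, hs, rfl⟩
    exact ⟨y, hyE, projMap_eq ha hx hs hzB.1 hzB.2 rfl⟩
  have hcover : E₀ ⊆ ⋃ j, (E₀ ∩ annulus x a j) := by
    intro y hy
    obtain ⟨j, hj⟩ := annulus_cover' hk ha (norm_sub_le_R ha hx (hFC (hEF hy))) (fun h => hxE (h ▸ hy))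
    exact mem_iUnion.2 ⟨j, hy, hj⟩
  have hperj : ∀ j : ℕ, μH[d] (projMap x a '' (E₀ ∩ annulus x a j)) ≤
      (ENNReal.ofReal (4 * (1 + 8 * Real.sqrt k) * (Real.sqrt k * a)))^d *
        ∫⁻ y in annulus x a j, f y ∂μ := by
    intro j
    have hk0 : (0:ℝ) ≤ Real.sqrt k := Real.sqrt_nonneg _
    set L : ℝ := 4 * (1 + 8 * Real.sqrt k) * 2^j with hL
    have hLpos : 0 < L := by positivity
    have hlip := (lipschitzOnWith_annulus hk ha hx j).mono
      (inter_subset_right : E₀ ∩ annulus x a j ⊆ annulus x a j)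
    have h1 := hlip.hausdorffMeasure_image_le (show (0:ℝ) ≤ (d:ℝ) by positivity)
    have h2 : μH[(d:ℝ)] (E₀ ∩ annulus x a j) ≤ μ (annulus x a j) := by
      rw [hμ, Measure.restrict_apply (measurableSet_annulus j)]
      exact measure_mono (fun y hy => ⟨hy.2, hEF hy.1⟩)
    set c : ℝ≥0∞ := (ENNReal.ofReal (Real.sqrt k * a / 2^j))⁻¹ ^ d with hc
    have hRj : (0:ℝ) < Real.sqrt k * a / 2^j := by
      have : (0:ℝ) < Real.sqrt k := Real.sqrt_pos.2 (by exact_mod_cast hk)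
      positivity
    have hfc : ∀ y ∈ annulus x a j, c ≤ f y := by
      intro y hy
      have hle : edist x y ≤ ENNReal.ofReal (Real.sqrt k * a / 2^j) := by
        rw [edist_dist]
        apply ENNReal.ofReal_le_ofReal
        rw [dist_comm, dist_eq_norm]
        exact hy.2
      exact pow_le_pow_left' (ENNReal.inv_le_inv.2 hle) d
    have h3 : c * μ (annulus x a j) ≤ ∫⁻ y in annulus x a j, f y ∂μ := by
      rw [← setLIntegral_const (annulus x a j) c]
      exact setLIntegral_mono hfmeas hfc
    have hc0 : c ≠ 0 := by
      rw [hc]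
      apply pow_ne_zero
      simp [ENNReal.ofReal_ne_top]
    have hctop : c ≠ ∞ := by
      rw [hc]
      exact ENNReal.pow_ne_top (ENNReal.inv_ne_top.2 (ENNReal.ofReal_pos.2 hRj).ne')
    have h4 : μ (annulus x a j) ≤ c⁻¹ * ∫⁻ y in annulus x a j, f y ∂μ := by
      rw [← one_mul (μ (annulus x a j)), ← ENNReal.inv_mul_cancel hc0 hctop, mul_assoc]
      exact mul_le_mul_right h3 _
    have hLc : ((L.toNNReal : ℝ≥0∞)) ^ ((d:ℝ)) * c⁻¹ =
        (ENNReal.ofReal (4 * (1 + 8 * Real.sqrt k) * (Real.sqrt k * a)))^d := by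
      have e1 : ((L.toNNReal : ℝ≥0∞)) ^ ((d:ℝ)) = (ENNReal.ofReal L)^d := by
        rw [ENNReal.rpow_natCast]; rfl
      have e2 : c⁻¹ = (ENNReal.ofReal (Real.sqrt k * a / 2^j))^d := by
        rw [hc, ← ENNReal.inv_pow, inv_inv]
      rw [e1, e2, ← mul_pow, ← ENNReal.ofReal_mul hLpos.le]
      congr 2
      rw [hL]
      field_simp
    calc μH[(d:ℝ)] (projMap x a '' (E₀ ∩ annulus x a j))
        ≤ ((L.toNNReal : ℝ≥0∞)) ^ ((d:ℝ)) * μH[(d:ℝ)] (E₀ ∩ annulus x a j) := h1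
      _ ≤ ((L.toNNReal : ℝ≥0∞)) ^ ((d:ℝ)) * (c⁻¹ * ∫⁻ y in annulus x a j, f y ∂μ) := by
          exact mul_le_mul_right (le_trans h2 h4) _
      _ = (ENNReal.ofReal (4 * (1 + 8 * Real.sqrt k) * (Real.sqrt k * a)))^d *
            ∫⁻ y in annulus x a j, f y ∂μ := by rw [← mul_assoc, hLc]
  calc μH[d] (radialProjImage (modelCube k a \ modelCubeInt k a) x E₀)
      ≤ μH[d] (projMap x a '' ⋃ j, (E₀ ∩ annulus x a j)) :=
        measure_mono (hsub.trans (image_mono hcover))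
    _ = μH[d] (⋃ j, projMap x a '' (E₀ ∩ annulus x a j)) := by rw [image_iUnion]
    _ ≤ ∑' j, μH[d] (projMap x a '' (E₀ ∩ annulus x a j)) := measure_iUnion_le _
    _ ≤ ∑' j, (ENNReal.ofReal (4 * (1 + 8 * Real.sqrt k) * (Real.sqrt k * a)))^d *
          ∫⁻ y in annulus x a j, f y ∂μ := ENNReal.tsum_le_tsum hperj
    _ = (ENNReal.ofReal (4 * (1 + 8 * Real.sqrt k) * (Real.sqrt k * a)))^d *
          ∑' j, ∫⁻ y in annulus x a j, f y ∂μ := ENNReal.tsum_mul_left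
    _ = (ENNReal.ofReal (4 * (1 + 8 * Real.sqrt k) * (Real.sqrt k * a)))^d *
          ∫⁻ y in ⋃ j, annulus x a j, f y ∂μ := by
        rw [lintegral_iUnion (fun j => measurableSet_annulus j) (disjoint_annulus ha) f]
    _ ≤ (ENNReal.ofReal (4 * (1 + 8 * Real.sqrt k) * (Real.sqrt k * a)))^d *
          ∫⁻ y, f y ∂μ := by
        apply mul_le_mul_right
        exact setLIntegral_le_lintegral _ _

end PB

def midCube (k : ℕ) (a : ℝ) : Set (EuclideanSpace ℝ (Fin k)) :=
  {y | ∀ i, y i ∈ Ioo (a/4) (3*a/4)}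

lemma real_calc (s b : ℝ) (hs : 0 < s) (hb : 0 < b) (d m j : ℕ) :
    ((s*b) / 2^(j+1))⁻¹^d * (2*((s*b)/2^j))^(d+m) =
      2^(2*d+m) * s^m * b^m * ((1:ℝ)/2^m)^j := by
  simp only [inv_div, div_pow, mul_pow, one_pow, ← pow_mul, pow_add, pow_one]
  field_simp
  ring

/-- volume of a coordinate box -/
lemma volume_pi_preimage (s : Fin k → Set ℝ) (hs : ∀ i, MeasurableSet (s i)) :
    (volume : Measure (EuclideanSpace ℝ (Fin k))) {y | ∀ i, y i ∈ s i} =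
      ∏ i, volume (s i) := by
  have h1 : {y : EuclideanSpace ℝ (Fin k) | ∀ i, y i ∈ s i} =
      ((MeasurableEquiv.toLp 2 (Fin k → ℝ)).symm) ⁻¹' (Set.pi univ s) := by
    ext y; simp [Set.mem_pi]
  rw [h1, (EuclideanSpace.volume_preserving_symm_measurableEquiv_toLp (Fin k)).measure_preimage
    (MeasurableSet.univ_pi hs).nullMeasurableSet]
  exact volume_pi_pi s

lemma volume_midCube {a : ℝ} (ha : 0 < a) :
    (volume : Measure (EuclideanSpace ℝ (Fin k))) (midCube k a) =
      (ENNReal.ofReal (a/2))^k := by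
  have := volume_pi_preimage (fun _ : Fin k => Ioo (a/4) (3*a/4)) (fun _ => measurableSet_Ioo)
  rw [show midCube k a = {y : EuclideanSpace ℝ (Fin k) | ∀ i, y i ∈ Ioo (a/4) (3*a/4)} from rfl,
    this]
  rw [Finset.prod_const]
  rw [Real.volume_Ioo]
  congr 2
  · ring
  · simp

lemma volume_closedBall_le (y : EuclideanSpace ℝ (Fin k)) {ρ : ℝ} (hρ : 0 ≤ ρ) :
    (volume : Measure (EuclideanSpace ℝ (Fin k))) (closedBall y ρ) ≤
      (ENNReal.ofReal (2*ρ))^k := by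
  have hsub : closedBall y ρ ⊆ {x : EuclideanSpace ℝ (Fin k) | ∀ i, x i ∈ Icc (y i - ρ) (y i + ρ)} := by
    intro x hx
    intro i
    have h1 : |(x - y) i| ≤ ‖x - y‖ := abs_coord_le_norm _ i
    have h2 : ‖x - y‖ ≤ ρ := by rwa [← dist_eq_norm, ← mem_closedBall]
    have h3 : (x - y) i = x i - y i := rfl
    rw [h3] at h1
    rw [abs_le] at h1
    constructor <;> [linarith [h1.1]; linarith [h1.2]]
  calc (volume : Measure (EuclideanSpace ℝ (Fin k))) (closedBall y ρ)
      ≤ volume {x : EuclideanSpace ℝ (Fin k) | ∀ i, x i ∈ Icc (y i - ρ) (y i + ρ)} :=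
        measure_mono hsub
    _ = ∏ _i : Fin k, volume (Icc (y (_i) - ρ) (y (_i) + ρ)) :=
        volume_pi_preimage _ (fun _ => measurableSet_Icc)
    _ = (ENNReal.ofReal (2*ρ))^k := by
        have : ∀ i : Fin k, volume (Icc (y i - ρ) (y i + ρ)) = ENNReal.ofReal (2*ρ) := by
          intro i; rw [Real.volume_Icc]; congr 1; ring
        rw [Finset.prod_congr rfl (fun i _ => this i), Finset.prod_const]
        simp

lemma volume_singleton (hk : 0 < k) (p : EuclideanSpace ℝ (Fin k)) :
    (volume : Measure (EuclideanSpace ℝ (Fin k))) {p} = 0 := by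
  have hsub : ({p} : Set (EuclideanSpace ℝ (Fin k))) ⊆ {z | ∀ i, z i ∈ Icc (p i) (p i)} := by
    rintro z rfl
    intro i
    exact ⟨le_refl _, le_refl _⟩
  refine le_antisymm ?_ (zero_le)
  calc (volume : Measure (EuclideanSpace ℝ (Fin k))) {p}
      ≤ volume {z : EuclideanSpace ℝ (Fin k) | ∀ i, z i ∈ Icc (p i) (p i)} := measure_mono hsub
    _ = ∏ i : Fin k, volume (Icc (p i) (p i)) :=
        volume_pi_preimage _ (fun _ => measurableSet_Icc)
    _ = 0 := by
        have : ∀ i : Fin k, volume (Icc (p i) (p i)) = 0 := by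
          intro i; rw [Real.volume_Icc]; simp
        rw [Finset.prod_congr rfl (fun i _ => this i), Finset.prod_const]
        simp [Finset.card_univ, zero_pow hk.ne']

lemma integral_bound (hk : 0 < k) {a : ℝ} (ha : 0 < a) (d m : ℕ) (hm : 0 < m)
    (hkdm : k = d + m) {y : EuclideanSpace ℝ (Fin k)} (hy : y ∈ modelCube k a) :
    ∫⁻ x in midCube k a, ((edist x y)⁻¹)^d ∂(volume : Measure (EuclideanSpace ℝ (Fin k))) ≤
      ENNReal.ofReal (2^(2*d+m+1) * (Real.sqrt k)^m * a^m) := by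
  set R := Real.sqrt k * a with hR
  have hkR : 0 < Real.sqrt k := Real.sqrt_pos.2 (by exact_mod_cast hk)
  have hRpos : 0 < R := mul_pos hkR ha
  set f : EuclideanSpace ℝ (Fin k) → ℝ≥0∞ := fun x => ((edist x y)⁻¹)^d with hf
  -- midCube ⊆ {y} ∪ ⋃ j annulus y a j
  have hmid : midCube k a ⊆ {y} ∪ ⋃ j, annulus y a j := by
    intro x hx
    rcases eq_or_ne x y with h | h
    · exact Or.inl h
    · refine Or.inr (mem_iUnion.2 ?_)
      apply annulus_cover' hk ha _ h
      apply norm_le_sqrt_mul _ ha.le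
      intro i
      have h1 := hx i
      have h2 := hy i
      have h3 : (x - y) i = x i - y i := rfl
      rw [h3, abs_le]
      constructor <;> [linarith [h1.1, h2.2]; linarith [h1.2, h2.1]]
  have hann : ∀ j : ℕ, ∫⁻ x in annulus y a j, f x ∂volume ≤
      ENNReal.ofReal (2^(2*d+m) * (Real.sqrt k)^m * a^m * ((1:ℝ)/2^m)^j) := by
    intro j
    have hRj1 : (0:ℝ) < R / 2^(j+1) := by positivity
    have hbound : ∀ x ∈ annulus y a j, f x ≤ (ENNReal.ofReal (R / 2^(j+1)))⁻¹ ^ d := by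
      intro x hx
      apply pow_le_pow_left'
      apply ENNReal.inv_le_inv.2
      rw [edist_dist]
      apply ENNReal.ofReal_le_ofReal
      rw [dist_eq_norm]
      exact le_of_lt hx.1
    calc ∫⁻ x in annulus y a j, f x ∂volume
        ≤ ∫⁻ _x in annulus y a j, (ENNReal.ofReal (R / 2^(j+1)))⁻¹ ^ d ∂volume :=
          setLIntegral_mono measurable_const hbound
      _ = (ENNReal.ofReal (R / 2^(j+1)))⁻¹ ^ d * volume (annulus y a j) :=
          setLIntegral_const _ _
      _ ≤ (ENNReal.ofReal (R / 2^(j+1)))⁻¹ ^ d * (ENNReal.ofReal (2*(R/2^j)))^k := by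
          apply mul_le_mul_right
          refine le_trans (measure_mono ?_) (volume_closedBall_le y (by positivity))
          intro x hx
          rw [mem_closedBall, dist_eq_norm]
          exact hx.2
      _ = ENNReal.ofReal (2^(2*d+m) * (Real.sqrt k)^m * a^m * ((1:ℝ)/2^m)^j) := by
          rw [← ENNReal.ofReal_inv_of_pos hRj1, ← ENNReal.ofReal_pow (by positivity),
            ← ENNReal.ofReal_pow (by positivity), ← ENNReal.ofReal_mul (by positivity)]
          congr 1
          have hp : (2*(R/2^j))^k = (2*(R/2^j))^(d+m) := by rw [← hkdm]
          rw [hp, hR]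
          exact real_calc (Real.sqrt k) a hkR ha d m j
  calc ∫⁻ x in midCube k a, f x ∂volume
      ≤ ∫⁻ x in {y} ∪ ⋃ j, annulus y a j, f x ∂volume := lintegral_mono_set hmid
    _ ≤ (∫⁻ x in {y}, f x ∂volume) + ∫⁻ x in ⋃ j, annulus y a j, f x ∂volume :=
        lintegral_union_le _ _ _
    _ ≤ 0 + ∑' j, ∫⁻ x in annulus y a j, f x ∂volume := by
        apply add_le_add
        · rw [setLIntegral_measure_zero _ _ (volume_singleton hk y)]
        · exact lintegral_iUnion_le _ _
    _ ≤ ∑' j : ℕ, ENNReal.ofReal (2^(2*d+m) * (Real.sqrt k)^m * a^m * ((1:ℝ)/2^m)^j) := by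
        rw [zero_add]
        exact ENNReal.tsum_le_tsum hann
    _ ≤ ENNReal.ofReal (2^(2*d+m+1) * (Real.sqrt k)^m * a^m) := by
        have hc : (0:ℝ) ≤ 2^(2*d+m) * (Real.sqrt k)^m * a^m := by positivity
        have step : ∀ j : ℕ, ENNReal.ofReal (2^(2*d+m) * (Real.sqrt k)^m * a^m * ((1:ℝ)/2^m)^j)
            = ENNReal.ofReal (2^(2*d+m) * (Real.sqrt k)^m * a^m) * (ENNReal.ofReal ((1:ℝ)/2^m))^j := by
          intro j
          rw [← ENNReal.ofReal_pow (by positivity), ← ENNReal.ofReal_mul hc]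
        calc ∑' j : ℕ, ENNReal.ofReal (2^(2*d+m) * (Real.sqrt k)^m * a^m * ((1:ℝ)/2^m)^j)
            = ENNReal.ofReal (2^(2*d+m) * (Real.sqrt k)^m * a^m) *
                ∑' j : ℕ, (ENNReal.ofReal ((1:ℝ)/2^m))^j := by
              rw [← ENNReal.tsum_mul_left]
              exact tsum_congr step
          _ ≤ ENNReal.ofReal (2^(2*d+m) * (Real.sqrt k)^m * a^m) * ∑' j : ℕ, (2⁻¹ : ℝ≥0∞)^j := by
              apply mul_le_mul_right
              apply ENNReal.tsum_le_tsum
              intro j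
              apply pow_le_pow_left'
              rw [one_div, ENNReal.ofReal_inv_of_pos (by positivity)]
              apply ENNReal.inv_le_inv.2
              rw [show ((2:ℝ≥0∞)) = ENNReal.ofReal 2 by rw [ENNReal.ofReal_ofNat]]
              apply ENNReal.ofReal_le_ofReal
              calc (2:ℝ) = 2^1 := (pow_one 2).symm
                _ ≤ 2^m := pow_le_pow_right₀ (by norm_num) hm
          _ = ENNReal.ofReal (2^(2*d+m) * (Real.sqrt k)^m * a^m) * 2 := by
              rw [ENNReal.tsum_geometric, ENNReal.one_sub_inv_two, inv_inv]
          _ = ENNReal.ofReal (2^(2*d+m+1) * (Real.sqrt k)^m * a^m) := by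
              rw [show (2:ℝ≥0∞) = ENNReal.ofReal 2 by rw [ENNReal.ofReal_ofNat],
                ← ENNReal.ofReal_mul hc]
              congr 1
              rw [pow_succ]
              ring


/-- The final constant. -/
def KConst (d k : ℕ) : ℝ :=
  (4*(1+8*Real.sqrt k)*Real.sqrt k)^d * 4 * 2^(2*k) * 2^(2*d+(k-d)+1) * (Real.sqrt k)^(k-d)

lemma KConst_pos {d k : ℕ} (hk : 0 < k) : 0 < KConst d k := by
  have : 0 < Real.sqrt k := Real.sqrt_pos.2 (by exact_mod_cast hk)
  unfold KConst
  positivity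

lemma lipschitzWith_equiv :
    LipschitzWith 1 ((MeasurableEquiv.toLp 2 (Fin k → ℝ)).symm) := by
  apply LipschitzWith.of_dist_le_mul
  intro u v
  simp only [NNReal.coe_one, one_mul]
  rw [dist_pi_le_iff dist_nonneg]
  intro i
  have h1 : |(u - v) i| ≤ ‖u - v‖ := abs_coord_le_norm _ i
  have h2 : (u - v) i = u i - v i := rfl
  rw [h2] at h1
  calc dist ((MeasurableEquiv.toLp 2 (Fin k → ℝ)).symm u i)
        ((MeasurableEquiv.toLp 2 (Fin k → ℝ)).symm v i) = |u i - v i| := by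
        rw [Real.dist_eq]; rfl
    _ ≤ ‖u - v‖ := h1
    _ = dist u v := (dist_eq_norm u v).symm

/-- if a set in Euclidean space has zero `μH[k]`, its image in the pi space has zero volume -/
lemma volume_pi_image_zero {S : Set (EuclideanSpace ℝ (Fin k))}
    (hS : μH[k] S = 0) :
    (volume : Measure (Fin k → ℝ)) (((MeasurableEquiv.toLp 2 (Fin k → ℝ)).symm) '' S) = 0 := by
  have h1 : (μH[Fintype.card (Fin k)] : Measure (Fin k → ℝ)) = volume :=
    MeasureTheory.hausdorffMeasure_pi_real
  rw [Fintype.card_fin] at h1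
  rw [← h1]
  have h2 := (lipschitzWith_equiv (k := k)).hausdorffMeasure_image_le
    (show (0:ℝ) ≤ (k:ℝ) by positivity) S
  rw [hS, mul_zero] at h2
  exact le_antisymm (by simpa using h2) (zero_le)

/-- volume in Euclidean space bounds `μH[k]` from below (via the pi space) -/
lemma volume_le_hausdorff (S : Set (EuclideanSpace ℝ (Fin k))) :
    (volume : Measure (EuclideanSpace ℝ (Fin k))) S ≤ μH[k] S := by
  set e := (MeasurableEquiv.toLp 2 (Fin k → ℝ)).symm with he
  have h1 : (volume : Measure (EuclideanSpace ℝ (Fin k))) S =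
      (volume : Measure (Fin k → ℝ)) (e '' S) := by
    rw [show (e '' S) = e.symm ⁻¹' S from Equiv.image_eq_preimage_symm e.toEquiv S]
    have hmp : MeasurePreserving (e.symm) :=
      MeasurePreserving.symm e (EuclideanSpace.volume_preserving_symm_measurableEquiv_toLp (Fin k))
    exact (hmp.measure_preimage_emb (e.symm).measurableEmbedding S).symm
  have h2 : (μH[Fintype.card (Fin k)] : Measure (Fin k → ℝ)) = volume :=
    MeasureTheory.hausdorffMeasure_pi_real
  rw [Fintype.card_fin] at h2
  have h3 := (lipschitzWith_equiv (k := k)).hausdorffMeasure_image_le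
    (show (0:ℝ) ≤ (k:ℝ) by positivity) S
  rw [h1, ← h2]
  simpa using h3

theorem model_main (d : ℕ) (hd : 1 ≤ d) (hdk : d < k) {a : ℝ} (ha : 0 < a)
    (E₀ : Set (EuclideanSpace ℝ (Fin k))) (hE : E₀ ⊆ modelCube k a)
    (hfin : μH[d] E₀ < ⊤) :
    ∃ X₀ : Set (EuclideanSpace ℝ (Fin k)),
      X₀ ⊆ modelCubeInt k a \ E₀ ∧ 0 < μH[k] X₀ ∧
      ∀ x ∈ X₀, μH[d] (radialProjImage (modelCube k a \ modelCubeInt k a) x E₀) ≤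
        ENNReal.ofReal (KConst d k) * μH[d] E₀ := by
  have hk : 0 < k := by omega
  set m := k - d with hm'
  have hm : 0 < m := by omega
  have hkdm : k = d + m := by omega
  have hsq : 0 < Real.sqrt k := Real.sqrt_pos.2 (by exact_mod_cast hk)
  -- the measurable hull
  set F := toMeasurable (μH[d] : Measure (EuclideanSpace ℝ (Fin k))) E₀ ∩ modelCube k a with hF
  have hFmeas : MeasurableSet F :=
    (measurableSet_toMeasurable _ _).inter (measurableSet_modelCube a)
  have hEF : E₀ ⊆ F := fun y hy => ⟨subset_toMeasurable _ _ hy, hE hy⟩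
  have hFC : F ⊆ modelCube k a := inter_subset_right
  have hFm : μH[d] F ≤ μH[d] E₀ := by
    calc μH[d] F ≤ μH[d] (toMeasurable (μH[d] : Measure (EuclideanSpace ℝ (Fin k))) E₀) :=
          measure_mono inter_subset_left
      _ = μH[d] E₀ := measure_toMeasurable E₀
  set μ := (μH[d] : Measure (EuclideanSpace ℝ (Fin k))).restrict F with hμ
  have hμfin : IsFiniteMeasure μ := by
    constructor
    rw [hμ, Measure.restrict_apply_univ]
    exact lt_of_le_of_lt hFm hfin
  haveI := hμfin
  -- the potential
  set f : EuclideanSpace ℝ (Fin k) → EuclideanSpace ℝ (Fin k) → ℝ≥0∞ :=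
    fun x y => ((edist x y)⁻¹)^d with hfdef
  have hfm : Measurable (Function.uncurry f) := by
    have : Continuous fun p : EuclideanSpace ℝ (Fin k) × EuclideanSpace ℝ (Fin k) =>
        edist p.1 p.2 := continuous_edist
    exact (this.measurable.inv).pow_const d
  set I : EuclideanSpace ℝ (Fin k) → ℝ≥0∞ := fun x => ∫⁻ y, f x y ∂μ with hI
  have hIm : Measurable I := Measurable.lintegral_prod_right hfm
  -- the null set G ⊇ E₀
  have hHk : μH[k] E₀ = 0 := by
    rcases MeasureTheory.Measure.hausdorffMeasure_zero_or_top (show (d:ℝ) < (k:ℝ) by exact_mod_cast hdk) E₀ with h | h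
    · exact h
    · exact absurd h (by simpa using hfin.ne)
  set e := (MeasurableEquiv.toLp 2 (Fin k → ℝ)).symm with he
  set Gpre := toMeasurable (volume : Measure (Fin k → ℝ)) (e '' E₀) with hGpre
  set G := e ⁻¹' Gpre with hG
  have hGmeas : MeasurableSet G := e.measurable (measurableSet_toMeasurable _ _)
  have hEG : E₀ ⊆ G := fun y hy => subset_toMeasurable _ _ (mem_image_of_mem _ hy)
  have hG0 : (volume : Measure (EuclideanSpace ℝ (Fin k))) G = 0 := by
    rw [hG, (EuclideanSpace.volume_preserving_symm_measurableEquiv_toLp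
      (Fin k)).measure_preimage (measurableSet_toMeasurable _ _).nullMeasurableSet]
    rw [measure_toMeasurable]
    exact volume_pi_image_zero hHk
  -- the integral bound
  have hIB : ∫⁻ x in midCube k a, I x ∂volume ≤
      ENNReal.ofReal (2^(2*d+m+1) * (Real.sqrt k)^m * a^m) * μH[d] E₀ := by
    have hswap : ∫⁻ x in midCube k a, I x ∂volume =
        ∫⁻ y, ∫⁻ x in midCube k a, f x y ∂volume ∂μ := by
      apply lintegral_lintegral_swap
      exact hfm.aemeasurable
    rw [hswap]
    calc ∫⁻ y, ∫⁻ x in midCube k a, f x y ∂volume ∂μ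
        ≤ ∫⁻ _y, ENNReal.ofReal (2^(2*d+m+1) * (Real.sqrt k)^m * a^m) ∂μ := by
          apply lintegral_mono_ae
          filter_upwards [ae_restrict_mem hFmeas] with y hy
          exact integral_bound hk ha d m hm hkdm (hFC hy)
      _ = ENNReal.ofReal (2^(2*d+m+1) * (Real.sqrt k)^m * a^m) * μ univ := lintegral_const _
      _ ≤ ENNReal.ofReal (2^(2*d+m+1) * (Real.sqrt k)^m * a^m) * μH[d] E₀ := by
          apply mul_le_mul_right
          rw [hμ, Measure.restrict_apply_univ]
          exact hFm
  rcases eq_or_ne (μH[d] E₀) 0 with h0 | h0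
  · -- trivial case : E₀ is μH[d]-null
    refine ⟨midCube k a \ G, ?_, ?_, ?_⟩
    · intro x hx
      exact ⟨fun i => ⟨by linarith [(hx.1 i).1], by linarith [(hx.1 i).2]⟩,
        fun hxe => hx.2 (hEG hxe)⟩
    · have h1 : (volume : Measure (EuclideanSpace ℝ (Fin k))) (midCube k a \ G) =
          volume (midCube k a) := measure_diff_null hG0
      have h2 : (0:ℝ≥0∞) < volume (midCube k a \ G) := by
        rw [h1, volume_midCube ha]
        positivity
      exact lt_of_lt_of_le h2 (volume_le_hausdorff _)
    · intro x hx
      have hμ0 : μ = 0 := by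
        rw [hμ, Measure.restrict_eq_zero]
        exact le_antisymm (h0 ▸ hFm) (zero_le)
      have := pointwise_bound hk ha
        (fun i => ⟨le_of_lt (hx.1 i).1, le_of_lt (hx.1 i).2⟩) d hFmeas hFC hEF
        (fun hxe => hx.2 (hEG hxe))
      rw [← hμ, hμ0] at this
      simp only [lintegral_zero_measure, mul_zero] at this
      exact le_trans this (zero_le)
  · -- main case
    have h0t : μH[d] E₀ ≠ ∞ := hfin.ne
    set cA := ENNReal.ofReal (4 * 2^k * (2^(2*d+m+1) * (Real.sqrt k)^m * a^m)) with hcA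
    set cB := ENNReal.ofReal ((a/2)^k) with hcB
    have hcA0 : cA ≠ 0 := by
      rw [hcA]
      simp only [ne_eq, ENNReal.ofReal_eq_zero, not_le]
      positivity
    have hcAt : cA ≠ ∞ := ENNReal.ofReal_ne_top
    have hcB0 : cB ≠ 0 := by
      rw [hcB]
      simp only [ne_eq, ENNReal.ofReal_eq_zero, not_le]
      positivity
    have hcBt : cB ≠ ∞ := ENNReal.ofReal_ne_top
    set T := cA * μH[d] E₀ * cB⁻¹ with hT
    have hT0 : T ≠ 0 := by
      rw [hT]
      apply mul_ne_zero (mul_ne_zero hcA0 h0)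
      exact ENNReal.inv_ne_zero.2 hcBt
    have hTt : T ≠ ∞ := by
      rw [hT]
      apply ENNReal.mul_ne_top (ENNReal.mul_ne_top hcAt h0t)
      exact ENNReal.inv_ne_top.2 hcB0
    -- Markov
    have hmark := mul_meas_ge_le_lintegral₀ (μ := volume.restrict (midCube k a))
      hIm.aemeasurable T
    have hbad : (volume.restrict (midCube k a)) {x | T ≤ I x} < cB := by
      by_contra hcon
      push_neg at hcon
      have h1 : T * cB ≤ T * (volume.restrict (midCube k a)) {x | T ≤ I x} :=
        mul_le_mul_right hcon _
      have h2 : T * cB ≤ ENNReal.ofReal (2^(2*d+m+1) * (Real.sqrt k)^m * a^m) * μH[d] E₀ :=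
        le_trans h1 (le_trans hmark hIB)
      have h3 : T * cB = cA * μH[d] E₀ := by
        rw [hT, mul_assoc, ENNReal.inv_mul_cancel hcB0 hcBt, mul_one]
      rw [h3] at h2
      have h4 : cA ≤ ENNReal.ofReal (2^(2*d+m+1) * (Real.sqrt k)^m * a^m) :=
        (ENNReal.mul_le_mul_iff_left h0 h0t).1 h2
      rw [hcA, ENNReal.ofReal_le_ofReal_iff (by positivity)] at h4
      nlinarith [pow_pos (show (0:ℝ) < 2 by norm_num) k,
        pow_pos (show (0:ℝ) < 2 by norm_num) (2*d+m+1), pow_pos hsq m, pow_pos ha m,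
        one_le_pow₀ (show (1:ℝ) ≤ 2 by norm_num) (n := k),
        mul_pos (mul_pos (pow_pos (show (0:ℝ) < 2 by norm_num) (2*d+m+1)) (pow_pos hsq m))
          (pow_pos ha m)]
    -- the good set
    set A := midCube k a ∩ {x | I x < T} with hA
    set X₀ := A \ G with hX₀
    have hvolA : 0 < (volume : Measure (EuclideanSpace ℝ (Fin k))) A := by
      by_contra hcon
      push_neg at hcon
      have hA0 : (volume : Measure (EuclideanSpace ℝ (Fin k))) A = 0 := le_antisymm hcon (zero_le)
      have hcover : midCube k a ⊆ A ∪ ({x | T ≤ I x} ∩ midCube k a) := by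
        intro x hx
        rcases lt_or_ge (I x) T with h | h
        · exact Or.inl ⟨hx, h⟩
        · exact Or.inr ⟨h, hx⟩
      have h5 : cB ≤ (volume : Measure (EuclideanSpace ℝ (Fin k))) A +
          volume ({x | T ≤ I x} ∩ midCube k a) := by
        rw [hcB, ENNReal.ofReal_pow (by positivity), ← volume_midCube ha]
        exact le_trans (measure_mono hcover) (measure_union_le _ _)
      rw [hA0, zero_add] at h5
      have h6 : volume ({x | T ≤ I x} ∩ midCube k a) =
          (volume.restrict (midCube k a)) {x | T ≤ I x} := by
        rw [Measure.restrict_apply (measurableSet_le measurable_const hIm)]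
      rw [h6] at h5
      exact absurd (lt_of_le_of_lt h5 hbad) (lt_irrefl _)
    refine ⟨X₀, ?_, ?_, ?_⟩
    · intro x hx
      exact ⟨fun i => ⟨by linarith [(hx.1.1 i).1], by linarith [(hx.1.1 i).2]⟩,
        fun hxe => hx.2 (hEG hxe)⟩
    · have h1 : (volume : Measure (EuclideanSpace ℝ (Fin k))) X₀ = volume A := by
        rw [hX₀]; exact measure_diff_null hG0
      exact lt_of_lt_of_le (h1 ▸ hvolA) (volume_le_hausdorff _)
    · intro x hx
      have hxmid : ∀ i, x i ∈ Icc (a/4) (3*a/4) :=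
        fun i => ⟨le_of_lt (hx.1.1 i).1, le_of_lt (hx.1.1 i).2⟩
      have hpb := pointwise_bound hk ha hxmid d hFmeas hFC hEF (fun hxe => hx.2 (hEG hxe))
      rw [← hμ] at hpb
      have hIx : I x ≤ T := le_of_lt hx.1.2
      calc μH[d] (radialProjImage (modelCube k a \ modelCubeInt k a) x E₀)
          ≤ (ENNReal.ofReal (4 * (1 + 8 * Real.sqrt k) * (Real.sqrt k * a)))^d * I x := hpb
        _ ≤ (ENNReal.ofReal (4 * (1 + 8 * Real.sqrt k) * (Real.sqrt k * a)))^d * T :=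
            mul_le_mul_right hIx _
        _ = ENNReal.ofReal (KConst d k) * μH[d] E₀ := by
            rw [hT, hcA, hcB]
            have hinv : (ENNReal.ofReal ((a/2)^k))⁻¹ = ENNReal.ofReal (((a/2)^k)⁻¹) :=
              (ENNReal.ofReal_inv_of_pos (by positivity)).symm
            rw [hinv, ← ENNReal.ofReal_pow (by positivity)]
            rw [show (ENNReal.ofReal ((4 * (1 + 8 * Real.sqrt k) * (Real.sqrt k * a))^d)) *
                (ENNReal.ofReal (4 * 2^k * (2^(2*d+m+1) * (Real.sqrt k)^m * a^m)) * μH[d] E₀ *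
                  ENNReal.ofReal (((a/2)^k)⁻¹)) =
              (ENNReal.ofReal ((4 * (1 + 8 * Real.sqrt k) * (Real.sqrt k * a))^d) *
                ENNReal.ofReal (4 * 2^k * (2^(2*d+m+1) * (Real.sqrt k)^m * a^m)) *
                ENNReal.ofReal (((a/2)^k)⁻¹)) * μH[d] E₀ by ring]
            congr 1
            rw [← ENNReal.ofReal_mul (by positivity), ← ENNReal.ofReal_mul (by positivity)]
            congr 1
            have hak : a^k = a^(d+m) := by rw [← hkdm]
            have ha' : a ≠ 0 := ne_of_gt ha
            rw [div_pow, hak]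
            rw [show 4*(1+8*Real.sqrt k)*(Real.sqrt k*a) =
              (4*(1+8*Real.sqrt k)*Real.sqrt k)*a by ring, mul_pow]
            field_simp
            unfold KConst
            rw [← hm']
            ring
    

end Stmt11Aux

theorem stmt11 (d k n : ℕ) (hd : 1 ≤ d) (hdk : d < k) (hkn : k ≤ n) :
    ∃ K : ℝ, 0 < K ∧
      ∀ a : ℝ, 0 < a →
      ∀ ι : EuclideanSpace ℝ (Fin k) →ᵃⁱ[ℝ] EuclideanSpace ℝ (Fin n),
      ∀ E : Set (EuclideanSpace ℝ (Fin n)), E ⊆ ι '' modelCube k a → μH[d] E < ⊤ →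
        ∃ X : Set (EuclideanSpace ℝ (Fin n)),
          X ⊆ (ι '' modelCubeInt k a) \ E ∧ 0 < μH[k] X ∧
          ∀ x ∈ X,
            μH[d] (radialProjImage (ι '' (modelCube k a \ modelCubeInt k a)) x E) ≤
              ENNReal.ofReal K * μH[d] E := by
  have hk : 0 < k := by omega
  refine ⟨Stmt11Aux.KConst d k, Stmt11Aux.KConst_pos hk, ?_⟩
  intro a ha ι E hEsub hEfin
  have hiso : Isometry ι := ι.isometry
  have hinj : Function.Injective ι := ι.injective
  set E₀ := (⇑ι) ⁻¹' E with hE₀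
  have himg : ι '' E₀ = E := by
    rw [hE₀, image_preimage_eq_inter_range]
    exact inter_eq_self_of_subset_left (hEsub.trans (image_subset_range _ _))
  have hE₀sub : E₀ ⊆ modelCube k a := by
    intro y hy
    obtain ⟨c, hc, hce⟩ := hEsub hy
    rwa [← hinj hce]
  have hHE : μH[d] E₀ = μH[d] E := by
    rw [← himg]
    exact (hiso.hausdorffMeasure_image (Or.inl (by positivity)) E₀).symm
  have hE₀fin : μH[d] E₀ < ⊤ := by rw [hHE]; exact hEfin
  obtain ⟨X₀, hX₀sub, hX₀pos, hX₀bd⟩ := Stmt11Aux.model_main d hd hdk ha E₀ hE₀sub hE₀fin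
  refine ⟨ι '' X₀, ?_, ?_, ?_⟩
  · rintro x ⟨x₀, hx₀, rfl⟩
    refine ⟨mem_image_of_mem _ (hX₀sub hx₀).1, ?_⟩
    intro hxE
    exact (hX₀sub hx₀).2 hxE
  · rwa [hiso.hausdorffMeasure_image (Or.inl (by positivity)) X₀]
  · rintro x ⟨x₀, hx₀, rfl⟩
    have hsub : radialProjImage (ι '' (modelCube k a \ modelCubeInt k a)) (ι x₀) E ⊆
        ι '' (radialProjImage (modelCube k a \ modelCubeInt k a) x₀ E₀) := by
      rintro z ⟨⟨w, hwB, rfl⟩, y, hyE, s, hs, hzeq⟩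
      have hyrange : y ∈ ι '' modelCube k a := hEsub hyE
      obtain ⟨y₀, hy₀C, rfl⟩ := hyrange
      have hy₀E : y₀ ∈ E₀ := hyE
      have haff : ι x₀ + s • (ι y₀ - ι x₀) = ι (x₀ + s • (y₀ - x₀)) := by
        have h1 : ι y₀ - ι x₀ = ι.linearIsometry (y₀ - x₀) := (ι.map_vsub y₀ x₀).symm
        have h2 : ι (s • (y₀ - x₀) +ᵥ x₀) = ι.linearIsometry (s • (y₀ - x₀)) +ᵥ ι x₀ :=
          ι.map_vadd x₀ (s • (y₀ - x₀))
        rw [show x₀ + s • (y₀ - x₀) = s • (y₀ - x₀) +ᵥ x₀ by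
          rw [vadd_eq_add, add_comm], h2]
        rw [h1, ι.linearIsometry.map_smul, vadd_eq_add, add_comm]
      rw [haff] at hzeq
      have hw : w = x₀ + s • (y₀ - x₀) := hinj hzeq
      exact ⟨w, ⟨hwB, y₀, hy₀E, s, hs, hw⟩, rfl⟩
    calc μH[d] (radialProjImage (ι '' (modelCube k a \ modelCubeInt k a)) (ι x₀) E)
        ≤ μH[d] (ι '' (radialProjImage (modelCube k a \ modelCubeInt k a) x₀ E₀)) :=
          measure_mono hsub
      _ = μH[d] (radialProjImage (modelCube k a \ modelCubeInt k a) x₀ E₀) :=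
          hiso.hausdorffMeasure_image (Or.inl (by positivity)) _
      _ ≤ ENNReal.ofReal (Stmt11Aux.KConst d k) * μH[d] E₀ := hX₀bd x₀ hx₀
      _ = ENNReal.ofReal (Stmt11Aux.KConst d k) * μH[d] E := by rw [hHE]
end
end
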